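/- For all f, g ∈ L¹(ℝ), the Hartley convolution satisfies ‖f ∗_{H₁} g‖_{L¹(ℝ)} ≤ √(2/π) ‖f‖_{L¹(ℝ)} ‖g‖_{L¹(ℝ)}. -/

import Mathlib

open MeasureTheory Real Complex Filter Topology
open scoped ENNReal NNReal

noncomputable def Hconv (f g : ℝ → ℂ) (x : ℝ) : ℂ :=
  (1 / (2 * Real.sqrt (2 * Real.pi))) *
    ∫ y : ℝ, f y * (g (x + y) + g (x - y) + g (-x + y) - g (-x - y))

section aux

open ENNReal

private lemma sqrt_arith :
    Real.sqrt (2 / Real.pi) = 4 * (1 / (2 * Real.sqrt (2 * Real.pi))) := by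
  have hπ : 0 < Real.pi := Real.pi_pos
  have h2π : Real.sqrt (2 * Real.pi) = Real.sqrt 2 * Real.sqrt Real.pi :=
    Real.sqrt_mul (by norm_num) _
  have hs2 : Real.sqrt 2 * Real.sqrt 2 = 2 := Real.mul_self_sqrt (by norm_num)
  have hsπ : 0 < Real.sqrt Real.pi := Real.sqrt_pos.2 hπ
  have hs2' : 0 < Real.sqrt 2 := Real.sqrt_pos.2 (by norm_num)
  have h1 : Real.sqrt (2 / Real.pi) = Real.sqrt 2 / Real.sqrt Real.pi :=
    Real.sqrt_div (by norm_num) _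
  rw [h1, h2π]
  field_simp
  nlinarith [hs2, hsπ, hs2']

/-- Main bound in `ℝ≥0∞`, for measurable functions. -/
private lemma lint_bound (f g : ℝ → ℂ) (hfm : Measurable f) (hgm : Measurable g) :
    ∫⁻ x : ℝ, ‖Hconv f g x‖₊ ≤
      ENNReal.ofReal (1 / (2 * Real.sqrt (2 * Real.pi))) *
        (4 * (∫⁻ y : ℝ, ‖f y‖₊) * (∫⁻ x : ℝ, ‖g x‖₊)) := by
  set c : ℝ := 1 / (2 * Real.sqrt (2 * Real.pi)) with hc
  have hc0 : 0 ≤ c := by positivity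
  set G : ℝ → ℝ≥0∞ := fun t => (‖g t‖₊ : ℝ≥0∞) with hG
  have hGm : Measurable G := hgm.nnnorm.coe_nnreal_ennreal
  set F : ℝ → ℝ≥0∞ := fun t => (‖f t‖₊ : ℝ≥0∞) with hF
  -- pointwise bound
  have step1 : ∀ x : ℝ, (‖Hconv f g x‖₊ : ℝ≥0∞) ≤
      ENNReal.ofReal c *
        ∫⁻ y, F y * (G (x + y) + G (x - y) + G (-x + y) + G (-x - y)) := by
    intro x
    have h1 : (‖Hconv f g x‖₊ : ℝ≥0∞) = ENNReal.ofReal c *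
        (‖∫ y : ℝ, f y * (g (x + y) + g (x - y) + g (-x + y) - g (-x - y))‖₊ : ℝ≥0∞) := by
      rw [Hconv, nnnorm_mul, ENNReal.coe_mul]
      congr 1
      rw [← enorm_eq_nnnorm, ← ofReal_norm]
      have : (1 / (2 * ((Real.sqrt (2 * Real.pi) : ℝ) : ℂ))) =
          ((1 / (2 * Real.sqrt (2 * Real.pi)) : ℝ) : ℂ) := by norm_cast
      rw [this, Complex.norm_real, Real.norm_eq_abs, _root_.abs_of_nonneg hc0]
    rw [h1]
    gcongr
    refine le_trans (enorm_integral_le_lintegral_enorm _) (lintegral_mono fun y => ?_)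
    rw [enorm_eq_nnnorm, nnnorm_mul, ENNReal.coe_mul]
    gcongr
    have tri : ‖g (x + y) + g (x - y) + g (-x + y) - g (-x - y)‖₊ ≤
        ‖g (x + y)‖₊ + ‖g (x - y)‖₊ + ‖g (-x + y)‖₊ + ‖g (-x - y)‖₊ :=
      calc ‖g (x + y) + g (x - y) + g (-x + y) - g (-x - y)‖₊
          ≤ ‖g (x + y) + g (x - y) + g (-x + y)‖₊ + ‖g (-x - y)‖₊ := nnnorm_sub_le _ _
        _ ≤ (‖g (x + y) + g (x - y)‖₊ + ‖g (-x + y)‖₊) + ‖g (-x - y)‖₊ := by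
            gcongr; exact nnnorm_add_le _ _
        _ ≤ ((‖g (x + y)‖₊ + ‖g (x - y)‖₊) + ‖g (-x + y)‖₊) + ‖g (-x - y)‖₊ := by
            gcongr; exact nnnorm_add_le _ _
    simp only [hG]
    exact_mod_cast tri
  calc ∫⁻ x : ℝ, (‖Hconv f g x‖₊ : ℝ≥0∞)
      ≤ ∫⁻ x : ℝ, ENNReal.ofReal c *
          ∫⁻ y, F y * (G (x + y) + G (x - y) + G (-x + y) + G (-x - y)) :=
        lintegral_mono step1
    _ = ENNReal.ofReal c * ∫⁻ x : ℝ,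
          ∫⁻ y, F y * (G (x + y) + G (x - y) + G (-x + y) + G (-x - y)) :=
        lintegral_const_mul _ (by
          apply Measurable.lintegral_prod_right
          fun_prop)
    _ = ENNReal.ofReal c * ∫⁻ y : ℝ,
          ∫⁻ x, F y * (G (x + y) + G (x - y) + G (-x + y) + G (-x - y)) := by
        congr 1
        refine lintegral_lintegral_swap ?_
        apply Measurable.aemeasurable
        fun_prop
    _ = ENNReal.ofReal c * (4 * (∫⁻ y : ℝ, F y) * (∫⁻ x : ℝ, G x)) := by
        congr 1
        have hneg : ∫⁻ x : ℝ, G (-x) = ∫⁻ x : ℝ, G x :=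
          (Measure.measurePreserving_neg (volume : Measure ℝ)).lintegral_comp hGm
        have key : ∀ y : ℝ,
            ∫⁻ x, F y * (G (x + y) + G (x - y) + G (-x + y) + G (-x - y)) =
              F y * (4 * ∫⁻ x : ℝ, G x) := by
          intro y
          rw [lintegral_const_mul _ (by fun_prop)]
          congr 1
          have e1 : ∫⁻ x : ℝ, G (x + y) = ∫⁻ x : ℝ, G x :=
            lintegral_add_right_eq_self G y
          have e2 : ∫⁻ x : ℝ, G (x - y) = ∫⁻ x : ℝ, G x :=
            lintegral_sub_right_eq_self G y
          have e3 : ∫⁻ x : ℝ, G (-x + y) = ∫⁻ x : ℝ, G x := by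
            have : ∀ x : ℝ, G (-x + y) = (fun t => G (-t)) (x - y) := by
              intro x; congr 1; ring
            simp_rw [this]
            rw [lintegral_sub_right_eq_self (fun t => G (-t)) y, hneg]
          have e4 : ∫⁻ x : ℝ, G (-x - y) = ∫⁻ x : ℝ, G x := by
            have : ∀ x : ℝ, G (-x - y) = (fun t => G (-t)) (x + y) := by
              intro x; congr 1; ring
            simp_rw [this]
            rw [lintegral_add_right_eq_self (fun t => G (-t)) y, hneg]
          rw [lintegral_add_left (by fun_prop), lintegral_add_left (by fun_prop),
            lintegral_add_left (by fun_prop), e1, e2, e3, e4]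
          ring
        simp_rw [key]
        rw [lintegral_mul_const _ (by fun_prop)]
        ring
  
end aux

private lemma hconv_congr (f g f' g' : ℝ → ℂ) (hff' : f =ᵐ[volume] f')
    (hgg' : g =ᵐ[volume] g') (x : ℝ) : Hconv f g x = Hconv f' g' x := by
  unfold Hconv
  congr 1
  refine integral_congr_ae ?_
  have h1 : ∀ᵐ y : ℝ, g (x + y) = g' (x + y) :=
    ae_eq_comp (measurePreserving_add_left (volume : Measure ℝ) x).aemeasurable
      (by rw [(measurePreserving_add_left (volume : Measure ℝ) x).map_eq]; exact hgg')
  have h2 : ∀ᵐ y : ℝ, g (x - y) = g' (x - y) :=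
    ae_eq_comp (Measure.measurePreserving_sub_left (volume : Measure ℝ) x).aemeasurable
      (by rw [(Measure.measurePreserving_sub_left (volume : Measure ℝ) x).map_eq]; exact hgg')
  have h3 : ∀ᵐ y : ℝ, g (-x + y) = g' (-x + y) :=
    ae_eq_comp (measurePreserving_add_left (volume : Measure ℝ) (-x)).aemeasurable
      (by rw [(measurePreserving_add_left (volume : Measure ℝ) (-x)).map_eq]; exact hgg')
  have h4 : ∀ᵐ y : ℝ, g (-x - y) = g' (-x - y) :=
    ae_eq_comp (Measure.measurePreserving_sub_left (volume : Measure ℝ) (-x)).aemeasurable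
      (by rw [(Measure.measurePreserving_sub_left (volume : Measure ℝ) (-x)).map_eq]; exact hgg')
  filter_upwards [hff', h1, h2, h3, h4] with y e0 e1 e2 e3 e4
  rw [e0, e1, e2, e3, e4]

private theorem stmt6_meas (f g : ℝ → ℂ) (hfm : Measurable f) (hgm : Measurable g)
    (hf : Integrable f) (hg : Integrable g) :
    ∫ x : ℝ, ‖Hconv f g x‖ ≤
      Real.sqrt (2 / Real.pi) * (∫ x : ℝ, ‖f x‖) * (∫ x : ℝ, ‖g x‖) := by
  have hnf : 0 ≤ ∫ x : ℝ, ‖f x‖ := integral_nonneg fun x => norm_nonneg _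
  have hng : 0 ≤ ∫ x : ℝ, ‖g x‖ := integral_nonneg fun x => norm_nonneg _
  have hsq : 0 ≤ Real.sqrt (2 / Real.pi) := Real.sqrt_nonneg _
  -- measurability of Hconv
  have hHm : Measurable (Hconv f g) := by
    have hF : StronglyMeasurable fun p : ℝ × ℝ =>
        f p.2 * (g (p.1 + p.2) + g (p.1 - p.2) + g (-p.1 + p.2) - g (-p.1 - p.2)) := by
      apply Measurable.stronglyMeasurable
      fun_prop
    have hint : StronglyMeasurable fun x : ℝ =>
        ∫ y : ℝ, f y * (g (x + y) + g (x - y) + g (-x + y) - g (-x - y)) :=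
      hF.integral_prod_right'
    exact (hint.measurable).const_mul _
  have key := lint_bound f g hfm hgm
  -- rewrite the RHS of key
  have hIf : (∫⁻ y : ℝ, (‖f y‖₊ : ℝ≥0∞)) = ENNReal.ofReal (∫ x : ℝ, ‖f x‖) :=
    (ofReal_integral_norm_eq_lintegral_enorm hf).symm
  have hIg : (∫⁻ y : ℝ, (‖g y‖₊ : ℝ≥0∞)) = ENNReal.ofReal (∫ x : ℝ, ‖g x‖) :=
    (ofReal_integral_norm_eq_lintegral_enorm hg).symm
  have hc0 : (0:ℝ) ≤ 1 / (2 * Real.sqrt (2 * Real.pi)) := by positivity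
  have hRHS : ENNReal.ofReal (1 / (2 * Real.sqrt (2 * Real.pi))) *
      (4 * (∫⁻ y : ℝ, (‖f y‖₊ : ℝ≥0∞)) * (∫⁻ x : ℝ, (‖g x‖₊ : ℝ≥0∞))) =
      ENNReal.ofReal (Real.sqrt (2 / Real.pi) * (∫ x : ℝ, ‖f x‖) * (∫ x : ℝ, ‖g x‖)) := by
    rw [hIf, hIg, show (4 : ℝ≥0∞) = ENNReal.ofReal 4 by norm_num,
      ← ENNReal.ofReal_mul (by norm_num), ← ENNReal.ofReal_mul (by positivity),
      ← ENNReal.ofReal_mul hc0]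
    congr 1
    rw [sqrt_arith]
    ring
  rw [hRHS] at key
  have h1 : ∫ x : ℝ, ‖Hconv f g x‖ =
      (∫⁻ x : ℝ, (‖Hconv f g x‖₊ : ℝ≥0∞)).toReal := by
    rw [integral_eq_lintegral_of_nonneg_ae (Eventually.of_forall fun x => norm_nonneg _)
      hHm.norm.aestronglyMeasurable]
    simp_rw [ofReal_norm, enorm_eq_nnnorm]
  rw [h1]
  calc (∫⁻ x : ℝ, (‖Hconv f g x‖₊ : ℝ≥0∞)).toReal
      ≤ (ENNReal.ofReal (Real.sqrt (2 / Real.pi) * (∫ x : ℝ, ‖f x‖) *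
          (∫ x : ℝ, ‖g x‖))).toReal := ENNReal.toReal_mono ENNReal.ofReal_ne_top key
    _ = _ := ENNReal.toReal_ofReal (by positivity)

theorem stmt6 (f g : ℝ → ℂ) (hf : Integrable f) (hg : Integrable g) :
    ∫ x : ℝ, ‖Hconv f g x‖ ≤
      Real.sqrt (2 / Real.pi) * (∫ x : ℝ, ‖f x‖) * (∫ x : ℝ, ‖g x‖) := by
  set f' := hf.1.mk f with hf'def
  set g' := hg.1.mk g with hg'def
  have hff' : f =ᵐ[volume] f' := hf.1.ae_eq_mk
  have hgg' : g =ᵐ[volume] g' := hg.1.ae_eq_mk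
  have hf'm : Measurable f' := hf.1.stronglyMeasurable_mk.measurable
  have hg'm : Measurable g' := hg.1.stronglyMeasurable_mk.measurable
  have hf' : Integrable f' := hf.congr hff'
  have hg' : Integrable g' := hg.congr hgg'
  have e1 : (∫ x : ℝ, ‖f x‖) = ∫ x : ℝ, ‖f' x‖ :=
    integral_congr_ae (hff'.mono fun y hy => by simp only [hy])
  have e2 : (∫ x : ℝ, ‖g x‖) = ∫ x : ℝ, ‖g' x‖ :=
    integral_congr_ae (hgg'.mono fun y hy => by simp only [hy])
  have e0 : (∫ x : ℝ, ‖Hconv f g x‖) = ∫ x : ℝ, ‖Hconv f' g' x‖ := by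
    refine integral_congr_ae (Eventually.of_forall fun x => ?_)
    simp only [hconv_congr f g f' g' hff' hgg' x]
  rw [e0, e1, e2]
  exact stmt6_meas f' g' hf'm hg'm hf' hg'
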